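/- Let M be a special local Moufang set with abelian root group U_∞ such that for each unit x, x·2 := x·α_x is also a unit. Then U_∞ is uniquely 2-divisible: for every g ∈ U_∞ there is a unique h ∈ U_∞ with h^2 = g. -/

import Mathlib

open Equiv

structure LocalMoufangSet (X : Type*) where
  r : X → X → Prop
  requiv : Equivalence r
  U : X → Subgroup (Equiv.Perm X)
  preserves : ∀ x : X, ∀ u ∈ U x, ∀ a b : X, r a b ↔ r (u a) (u b)
  big : ∃ a b c : X, ¬ r a b ∧ ¬ r b c ∧ ¬ r a c
  lm1 : ∀ x y : X, r x y → ∀ u ∈ U x, ∃ v ∈ U y, ∀ z : X, r (u z) (v z)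
  lm2_fix : ∀ x : X, ∀ u ∈ U x, u x = x
  lm2_trans : ∀ x y z : X, ¬ r y x → ¬ r z x → ∃! u : Equiv.Perm X, u ∈ U x ∧ u y = z
  lm2'_trans : ∀ x y z : X, ¬ r y x → ¬ r z x → ∃ u ∈ U x, r (u y) z
  lm2'_free : ∀ x : X, ∀ u ∈ U x, ∀ y : X, ¬ r y x → r (u y) y → ∀ z : X, r (u z) z
  lm3 : ∀ x : X, ∀ g ∈ (⨆ y : X, U y : Subgroup (Equiv.Perm X)),
      (U x).map (MulAut.conj g).toMonoidHom = U (g x)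

namespace LocalMoufangSet

variable {X : Type*} (M : LocalMoufangSet X)

/-- The little projective group. -/
def G : Subgroup (Equiv.Perm X) := ⨆ x : X, M.U x

/-- `x` is a unit with respect to the base points `o` (zero) and `ι` (infinity). -/
def IsUnitPt (o ι x : X) : Prop := ¬ M.r x o ∧ ¬ M.r x ι

/-- `μ` is the μ-map of `x`: it lies in the double coset `U_0 α_x U_0` and swaps `o` and `ι`.
(We use the left-action convention: a right product `g α h` corresponds to `h * α * g`.) -/
def IsMuMap (o ι x : X) (μ : Equiv.Perm X) : Prop :=
  μ o = ι ∧ μ ι = o ∧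
    ∃ a ∈ M.U ι, a o = x ∧ ∃ g ∈ M.U o, ∃ h ∈ M.U o, μ = h * a * g

/-- Specialness with respect to a μ-map `τ`: `(-x)τ = -(xτ)` for all units `x`. -/
def Special (o ι : X) (τ : Equiv.Perm X) : Prop :=
  ∀ z : X, IsUnitPt M o ι z → ∀ a ∈ M.U ι, a o = z → ∀ b ∈ M.U ι, b o = τ z →
    τ (a⁻¹ o) = b⁻¹ o

end LocalMoufangSet

theorem Equiv.Perm.apply_inv_self {α : Type*} (f : Equiv.Perm α) (x : α) : f (f⁻¹ x) = x :=
  Equiv.apply_symm_apply f x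

theorem Equiv.Perm.inv_apply_self {α : Type*} (f : Equiv.Perm α) (x : α) : f⁻¹ (f x) = x :=
  Equiv.symm_apply_apply f x

namespace LocalMoufangSet

variable {X : Type*} (M : LocalMoufangSet X)

lemma usym {x y : X} (h : ¬ M.r x y) : ¬ M.r y x := fun h' => h (M.requiv.symm h')

/-- The unique element of `U x` sending `y` to `z`. -/
noncomputable def el (x y z : X) (hy : ¬ M.r y x) (hz : ¬ M.r z x) : Equiv.Perm X :=
  (M.lm2_trans x y z hy hz).exists.choose

lemma el_mem (x y z : X) (hy : ¬ M.r y x) (hz : ¬ M.r z x) : M.el x y z hy hz ∈ M.U x :=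
  (M.lm2_trans x y z hy hz).exists.choose_spec.1

lemma el_map (x y z : X) (hy : ¬ M.r y x) (hz : ¬ M.r z x) : M.el x y z hy hz y = z :=
  (M.lm2_trans x y z hy hz).exists.choose_spec.2

lemma el_eq (x y z : X) (hy : ¬ M.r y x) (hz : ¬ M.r z x) {u : Equiv.Perm X}
    (hu : u ∈ M.U x) (huy : u y = z) : u = M.el x y z hy hz :=
  (M.lm2_trans x y z hy hz).unique ⟨hu, huy⟩
    ⟨M.el_mem x y z hy hz, M.el_map x y z hy hz⟩

lemma img_ne (x : X) {u : Equiv.Perm X} (hu : u ∈ M.U x) {y : X} (hy : ¬ M.r y x) :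
    ¬ M.r (u y) x := by
  intro hc
  have h1 := M.preserves x u hu y x
  rw [M.lm2_fix x u hu] at h1
  exact hy (h1.mpr hc)

lemma eqq (x y : X) (hy : ¬ M.r y x) {u v : Equiv.Perm X} (hu : u ∈ M.U x) (hv : v ∈ M.U x)
    (h : u y = v y) : u = v :=
  (M.lm2_trans x y (u y) hy (M.img_ne x hu hy)).unique ⟨hu, rfl⟩ ⟨hv, h.symm⟩

lemma mem_G {x : X} {u : Equiv.Perm X} (hu : u ∈ M.U x) :
    u ∈ (⨆ y : X, M.U y : Subgroup (Equiv.Perm X)) :=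
  (le_iSup (fun y => M.U y) x) hu

lemma G_pres {g : Equiv.Perm X} (hg : g ∈ (⨆ y : X, M.U y : Subgroup (Equiv.Perm X))) :
    ∀ a b : X, M.r a b ↔ M.r (g a) (g b) := by
  refine Subgroup.iSup_induction (C := fun g => ∀ a b : X, M.r a b ↔ M.r (g a) (g b))
    (fun y => M.U y) hg (fun i x hx => M.preserves i x hx) (by simp) ?_
  intro p q hp hq a b
  have := (hq a b).trans (hp (q a) (q b))
  simpa [Equiv.Perm.mul_apply] using this

lemma conj_mem {g : Equiv.Perm X} (hg : g ∈ (⨆ y : X, M.U y : Subgroup (Equiv.Perm X)))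
    {x : X} {u : Equiv.Perm X} (hu : u ∈ M.U x) : g * u * g⁻¹ ∈ M.U (g x) := by
  rw [← M.lm3 x g hg]
  exact Subgroup.mem_map.mpr ⟨u, hu, by simp [MulAut.conj_apply]⟩

/-- The key braid-type computation: if `pt = b_z z` (the "`U O`-double" of `z`), then
`a_pt` squares to `a_z`. -/
lemma key (O I : X) (hOI : ¬ M.r O I) (hIO : ¬ M.r I O) (z pt : X)
    (hzO : ¬ M.r z O) (hzI : ¬ M.r z I) (hptO : ¬ M.r pt O) (hptI : ¬ M.r pt I)
    (hpt : (M.el O I z hIO hzO) z = pt)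
    (hR5z : (M.el O I z hIO hzO)⁻¹ I = (M.el I O z hOI hzI)⁻¹ O)
    (hR5pt : (M.el O I pt hIO hptO)⁻¹ I = (M.el I O pt hOI hptI)⁻¹ O) :
    (M.el I O pt hOI hptI) * (M.el I O pt hOI hptI) = M.el I O z hOI hzI := by
  set az := M.el I O z hOI hzI with hazdef
  set bz := M.el O I z hIO hzO with hbzdef
  set apt := M.el I O pt hOI hptI with haptdef
  set bpt := M.el O I pt hIO hptO with hbptdef
  have hazU : az ∈ M.U I := M.el_mem I O z hOI hzI
  have hbzU : bz ∈ M.U O := M.el_mem O I z hIO hzO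
  have haptU : apt ∈ M.U I := M.el_mem I O pt hOI hptI
  have hazO : az O = z := M.el_map I O z hOI hzI
  have hbzI : bz I = z := M.el_map O I z hIO hzO
  have haptO : apt O = pt := M.el_map I O pt hOI hptI
  have hb2 : bz * bz = bpt := by
    refine M.el_eq O I pt hIO hptO (mul_mem hbzU hbzU) ?_
    show bz (bz I) = pt
    rw [hbzI, hpt]
  have hA1U : az * bz * az⁻¹ ∈ M.U z := by
    have := M.conj_mem (M.mem_G hazU) hbzU
    rwa [hazO] at this
  have hA2U : bz * az⁻¹ * bz⁻¹ ∈ M.U z := by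
    have := M.conj_mem (M.mem_G hbzU) (inv_mem hazU)
    rwa [hbzI] at this
  have hA1O : (az * bz * az⁻¹) O = I := by
    simp only [Equiv.Perm.mul_apply]
    rw [← hR5z, Equiv.Perm.apply_inv_self, M.lm2_fix I az hazU]
  have hA2O : (bz * az⁻¹ * bz⁻¹) O = I := by
    simp only [Equiv.Perm.mul_apply]
    rw [M.lm2_fix O bz⁻¹ (inv_mem hbzU), ← hR5z, Equiv.Perm.apply_inv_self]
  have hA12 : az * bz * az⁻¹ = bz * az⁻¹ * bz⁻¹ :=
    M.eqq z O (M.usym hzO) hA1U hA2U (hA1O.trans hA2O.symm)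
  have hinv : az * bz⁻¹ * az⁻¹ = bz * az * bz⁻¹ := by
    have h : (az * bz * az⁻¹)⁻¹ = (bz * az⁻¹ * bz⁻¹)⁻¹ := by rw [hA12]
    simpa [mul_inv_rev, mul_assoc] using h
  have heval : az (apt⁻¹ O) = pt := by
    have h := congrArg (fun f : Equiv.Perm X => f O) hinv
    simp only [Equiv.Perm.mul_apply] at h
    rw [M.lm2_fix O bz⁻¹ (inv_mem hbzU), hazO, hpt, ← hR5z] at h
    have hb2inv : bz⁻¹ * bz⁻¹ = bpt⁻¹ := by rw [← mul_inv_rev, hb2]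
    have h3 : bz⁻¹ (bz⁻¹ I) = bpt⁻¹ I := by
      have := congrArg (fun f : Equiv.Perm X => f I) hb2inv
      simpa [Equiv.Perm.mul_apply] using this
    rw [h3, hR5pt] at h
    exact h
  have hu : apt⁻¹ * az * apt⁻¹ = 1 := by
    refine M.eqq I O hOI (mul_mem (mul_mem (inv_mem haptU) hazU) (inv_mem haptU))
      (one_mem _) ?_
    simp only [Equiv.Perm.mul_apply, Equiv.Perm.one_apply]
    rw [heval, ← haptO, Equiv.Perm.inv_apply_self]
  have hfin : apt * (apt⁻¹ * az * apt⁻¹) * apt = az := by group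
  rw [hu, mul_one] at hfin
  exact hfin

/-- Specialness: the two negatives of a unit agree. -/
lemma rfive (o ι e : X) (h0 : ¬ M.r o ι) (τ : Equiv.Perm X) (hτ : M.IsMuMap o ι e τ)
    (hsp : M.Special o ι τ) (w : X) (hwo : ¬ M.r w o) (hwι : ¬ M.r w ι) :
    (M.el o ι w (M.usym h0) hwo)⁻¹ ι = (M.el ι o w h0 hwι)⁻¹ o := by
  obtain ⟨hτo, hτι, a, haU, hao, g1, hgU, h1, hhU, heq⟩ := hτ
  have hτG : τ ∈ (⨆ y : X, M.U y : Subgroup (Equiv.Perm X)) := by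
    rw [heq]
    exact mul_mem (mul_mem (M.mem_G hhU) (M.mem_G haU)) (M.mem_G hgU)
  have hτinv : τ⁻¹ ι = o := by rw [← hτo, Equiv.Perm.inv_apply_self]
  have hcw : τ (τ⁻¹ w) = w := Equiv.Perm.apply_inv_self τ w
  have hco : ¬ M.r (τ⁻¹ w) o := by
    intro h
    have := (M.G_pres hτG (τ⁻¹ w) o).mp h
    rw [hcw, hτo] at this
    exact hwι this
  have hcι : ¬ M.r (τ⁻¹ w) ι := by
    intro h
    have := (M.G_pres hτG (τ⁻¹ w) ι).mp h
    rw [hcw, hτι] at this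
    exact hwo this
  have hBmem : τ * (M.el ι o (τ⁻¹ w) h0 hcι) * τ⁻¹ ∈ M.U o := by
    have := M.conj_mem hτG (M.el_mem ι o (τ⁻¹ w) h0 hcι)
    rwa [hτι] at this
  have hBι : (τ * (M.el ι o (τ⁻¹ w) h0 hcι) * τ⁻¹) ι = w := by
    simp only [Equiv.Perm.mul_apply]
    rw [hτinv, M.el_map ι o (τ⁻¹ w) h0 hcι, hcw]
  have hBel : τ * (M.el ι o (τ⁻¹ w) h0 hcι) * τ⁻¹ = M.el o ι w (M.usym h0) hwo :=
    M.el_eq o ι w (M.usym h0) hwo hBmem hBι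
  rw [← hBel]
  have hexp : (τ * (M.el ι o (τ⁻¹ w) h0 hcι) * τ⁻¹)⁻¹ ι
      = τ ((M.el ι o (τ⁻¹ w) h0 hcι)⁻¹ o) := by
    simp [mul_inv_rev, Equiv.Perm.mul_apply, hτinv]
  rw [hexp]
  exact hsp (τ⁻¹ w) ⟨hco, hcι⟩ (M.el ι o (τ⁻¹ w) h0 hcι) (M.el_mem ι o (τ⁻¹ w) h0 hcι)
    (M.el_map ι o (τ⁻¹ w) h0 hcι) (M.el ι o w h0 hwι) (M.el_mem ι o w h0 hwι)
    ((M.el_map ι o w h0 hwι).trans hcw.symm)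

/-- The `U o`-double of a unit is not equivalent to `ι` (this uses `h2`). -/
lemma dpu (o ι e : X) (h0 : ¬ M.r o ι) (τ : Equiv.Perm X) (hτ : M.IsMuMap o ι e τ)
    (hsp : M.Special o ι τ)
    (h2 : ∀ x : X, M.IsUnitPt o ι x → ∀ a ∈ M.U ι, a o = x → M.IsUnitPt o ι (a x))
    (w : X) (hwo : ¬ M.r w o) (hwι : ¬ M.r w ι) :
    ¬ M.r ((M.el o ι w (M.usym h0) hwo) w) ι := by
  intro H
  have hβU := M.el_mem o ι w (M.usym h0) hwo
  have hαU := M.el_mem ι o w h0 hwι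
  have hP := M.preserves o _ hβU w ((M.el o ι w (M.usym h0) hwo)⁻¹ ι)
  rw [Equiv.Perm.apply_inv_self] at hP
  have h1 : M.r w ((M.el o ι w (M.usym h0) hwo)⁻¹ ι) := hP.mpr H
  rw [M.rfive o ι e h0 τ hτ hsp w hwo hwι] at h1
  have h3 := (M.preserves ι _ hαU w ((M.el ι o w h0 hwι)⁻¹ o)).mp h1
  rw [Equiv.Perm.apply_inv_self] at h3
  exact (h2 w ⟨hwo, hwι⟩ (M.el ι o w h0 hwι) hαU (M.el_map ι o w h0 hwι)).1 h3

end LocalMoufangSet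


/-- if `U_∞` is abelian and `x·2` is a unit for every unit `x`,
then `U_∞` is uniquely 2-divisible. -/
theorem stmt18 {X : Type*} (M : LocalMoufangSet X) (o ι : X) (h0 : ¬ M.r o ι)
    (e : X) (he : M.IsUnitPt o ι e)
    (τ : Equiv.Perm X) (hτ : M.IsMuMap o ι e τ)
    (hsp : M.Special o ι τ)
    (hab : ∀ u ∈ M.U ι, ∀ v ∈ M.U ι, u * v = v * u)
    (h2 : ∀ x : X, M.IsUnitPt o ι x → ∀ a ∈ M.U ι, a o = x →
      M.IsUnitPt o ι (a x)) :
    ∀ g ∈ M.U ι, ∃! h : Equiv.Perm X, h ∈ M.U ι ∧ h * h = g := by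
  intro g hg
  have hιo : ¬ M.r ι o := M.usym h0
  obtain ⟨heo, heι⟩ := he
  set αe := M.el ι o e h0 heι with hαedef
  have hαeU : αe ∈ M.U ι := M.el_mem ι o e h0 heι
  have hαeo : αe o = e := M.el_map ι o e h0 heι
  obtain ⟨hso, hsι⟩ : M.IsUnitPt o ι (αe e) := h2 e ⟨heo, heι⟩ αe hαeU hαeo
  -- surjectivity on "unit" elements
  have surj : ∀ g' : Equiv.Perm X, g' ∈ M.U ι → ¬ M.r (g' o) o →
      ∃ h', h' ∈ M.U ι ∧ h' * h' = g' := by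
    intro g' hg' hw
    have hwι : ¬ M.r (g' o) ι := M.img_ne ι hg' h0
    have hβU := M.el_mem o ι (g' o) hιo hw
    have hptι : ¬ M.r ((M.el o ι (g' o) hιo hw) (g' o)) ι :=
      M.dpu o ι e h0 τ hτ hsp h2 (g' o) hw hwι
    have hpto : ¬ M.r ((M.el o ι (g' o) hιo hw) (g' o)) o := M.img_ne o hβU hw
    have hkey := M.key o ι h0 hιo (g' o) ((M.el o ι (g' o) hιo hw) (g' o))
      hw hwι hpto hptι rfl
      (M.rfive o ι e h0 τ hτ hsp (g' o) hw hwι)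
      (M.rfive o ι e h0 τ hτ hsp _ hpto hptι)
    have hgel : g' = M.el ι o (g' o) h0 hwι := M.el_eq ι o (g' o) h0 hwι hg' rfl
    exact ⟨_, M.el_mem ι o _ h0 hptι, by rw [hkey, ← hgel]⟩
  -- no 2-torsion
  have no2 : ∀ v : Equiv.Perm X, v ∈ M.U ι → v * v = 1 → v = 1 := by
    intro v hv hv2
    have hk : M.r (v o) o := by
      by_contra hko
      have hkι : ¬ M.r (v o) ι := M.img_ne ι hv h0
      have hunit := h2 (v o) ⟨hko, hkι⟩ v hv rfl
      have hvvo : v (v o) = o := by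
        have h := congrArg (fun f : Equiv.Perm X => f o) hv2
        simpa [Equiv.Perm.mul_apply] using h
      rw [hvvo] at hunit
      exact hunit.1 (M.requiv.refl o)
    have hqU : v * αe ∈ M.U ι := mul_mem hv hαeU
    have hqo : (v * αe) o = v e := by
      simp only [Equiv.Perm.mul_apply]
      rw [hαeo]
    have htι : ¬ M.r (v e) ι := by
      have := M.img_ne ι hqU h0
      rwa [hqo] at this
    have hte : M.r (v e) e := M.lm2'_free ι v hv o h0 hk e
    have hto : ¬ M.r (v e) o := fun hc => heo (M.requiv.trans (M.requiv.symm hte) hc)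
    have hqel : v * αe = M.el ι o (v e) h0 htι := M.el_eq ι o (v e) h0 htι hqU hqo
    have hqq : (v * αe) * (v * αe) = αe * αe := by
      have hcomm : αe * v = v * αe := hab αe hαeU v hv
      calc (v * αe) * (v * αe) = v * (αe * v) * αe := by group
        _ = v * (v * αe) * αe := by rw [hcomm]
        _ = (v * v) * (αe * αe) := by group
        _ = αe * αe := by rw [hv2, one_mul]
    have hpt_t : (M.el ι o (v e) h0 htι) (v e) = αe e := by
      rw [← hqel]
      have h := congrArg (fun f : Equiv.Perm X => f o) hqq
      simp only [Equiv.Perm.mul_apply] at h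
      rw [hαeo] at h
      show (v * αe) (v e) = αe e
      simp only [Equiv.Perm.mul_apply]
      exact h
    have hkey_t := M.key ι o hιo h0 (v e) (αe e) htι hto hsι hso hpt_t
      (M.rfive o ι e h0 τ hτ hsp (v e) hto htι).symm
      (M.rfive o ι e h0 τ hτ hsp (αe e) hso hsι).symm
    have hpt_e : (M.el ι o e h0 heι) e = αe e := by rw [← hαedef]
    have hkey_e := M.key ι o hιo h0 e (αe e) heι heo hsι hso hpt_e
      (M.rfive o ι e h0 τ hτ hsp e heo heι).symm
      (M.rfive o ι e h0 τ hτ hsp (αe e) hso hsι).symm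
    have hβte : M.el o ι (v e) hιo hto = M.el o ι e hιo heo := by
      rw [← hkey_t, ← hkey_e]
    have hte2 : v e = e := by
      have ha := M.el_map o ι (v e) hιo hto
      rw [hβte, M.el_map o ι e hιo heo] at ha
      exact ha.symm
    have hqαe : v * αe = αe := by
      refine M.eqq ι o h0 hqU hαeU ?_
      rw [hqo, hαeo, hte2]
    have := mul_right_cancel (b := αe) (by rw [hqαe, one_mul] : v * αe = 1 * αe)
    exact this
  -- existence
  have hex : ∃ h, h ∈ M.U ι ∧ h * h = g := by
    rcases Classical.em (M.r (g o) o) with hker | hgo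
    · have hg'U : g * (αe * αe) ∈ M.U ι := mul_mem hg (mul_mem hαeU hαeU)
      have hg'o : (g * (αe * αe)) o = g (αe e) := by
        simp only [Equiv.Perm.mul_apply]
        rw [hαeo]
      have hgso : ¬ M.r (g (αe e)) o := by
        intro hc
        have h1 : M.r (αe e) o ↔ M.r (g (αe e)) (g o) := M.preserves ι g hg (αe e) o
        exact hso (h1.mpr (M.requiv.trans hc (M.requiv.symm hker)))
      obtain ⟨h', hh'U, hh'2⟩ := surj (g * (αe * αe)) hg'U (by rw [hg'o]; exact hgso)
      refine ⟨h' * αe⁻¹, mul_mem hh'U (inv_mem hαeU), ?_⟩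
      have hcomm : αe⁻¹ * h' = h' * αe⁻¹ := hab αe⁻¹ (inv_mem hαeU) h' hh'U
      calc (h' * αe⁻¹) * (h' * αe⁻¹) = h' * (αe⁻¹ * h') * αe⁻¹ := by group
        _ = h' * (h' * αe⁻¹) * αe⁻¹ := by rw [hcomm]
        _ = (h' * h') * (αe⁻¹ * αe⁻¹) := by group
        _ = (g * (αe * αe)) * (αe⁻¹ * αe⁻¹) := by rw [hh'2]
        _ = g := by group
    · exact surj g hg hgo
  obtain ⟨h, hhU, hh2⟩ := hex
  refine ⟨h, ⟨hhU, hh2⟩, ?_⟩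
  rintro y ⟨hyU, hy2⟩
  have hvU : y * h⁻¹ ∈ M.U ι := mul_mem hyU (inv_mem hhU)
  have hv2 : (y * h⁻¹) * (y * h⁻¹) = 1 := by
    have hcomm : h⁻¹ * y = y * h⁻¹ := hab h⁻¹ (inv_mem hhU) y hyU
    have hinv2 : h⁻¹ * h⁻¹ = g⁻¹ := by rw [← mul_inv_rev, hh2]
    calc (y * h⁻¹) * (y * h⁻¹) = y * (h⁻¹ * y) * h⁻¹ := by group
      _ = y * (y * h⁻¹) * h⁻¹ := by rw [hcomm]
      _ = (y * y) * (h⁻¹ * h⁻¹) := by group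
      _ = g * g⁻¹ := by rw [hy2, hinv2]
      _ = 1 := mul_inv_cancel g
  have := no2 (y * h⁻¹) hvU hv2
  exact mul_inv_eq_one.mp this
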